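/- Let (Φ, F+η) be a generalized almost contact pair on the (2n+1)-dimensional vector space V. Then (V⊕V*)_ℂ decomposes as a direct sum ℂ·F ⊕ ℂ·η ⊕ E^{1,0} ⊕ E^{0,1}, where E^{1,0} is the +i eigenspace of Φ, E^{0,1} is the −i eigenspace, and ℂ·F ⊕ ℂ·η is the 0-eigenspace. -/

import Mathlib

open TensorProduct

/-- Evaluation `(X,α) ↦ η(X)` on the double `V ⊕ V*`. -/
noncomputable def gcEta {V : Type*} [AddCommGroup V] [Module ℝ V] (η : (V →ₗ[ℝ] ℝ)) :
    (V × (V →ₗ[ℝ] ℝ)) →ₗ[ℝ] ℝ :=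
  η.comp (LinearMap.fst ℝ V ((V →ₗ[ℝ] ℝ)))

/-- Evaluation `(X,α) ↦ α(F)` on the double `V ⊕ V*`. -/
noncomputable def gcF {V : Type*} [AddCommGroup V] [Module ℝ V] (F : V) :
    (V × (V →ₗ[ℝ] ℝ)) →ₗ[ℝ] ℝ :=
  (LinearMap.applyₗ F).comp (LinearMap.snd ℝ V ((V →ₗ[ℝ] ℝ)))

/-- The complexification of `ker η ⊕ ker F` inside `(V ⊕ V*) ⊗ ℂ`. -/
noncomputable def gcKerC {V : Type*} [AddCommGroup V] [Module ℝ V]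
    (F : V) (η : (V →ₗ[ℝ] ℝ)) : Submodule ℂ (ℂ ⊗[ℝ] (V × (V →ₗ[ℝ] ℝ))) :=
  (LinearMap.ker (gcEta η) ⊓ LinearMap.ker (gcF F)).baseChange ℂ

/-- The map `e ↦ e − iΦ(e)` on the complexified double. -/
noncomputable def gcProj10 {V : Type*} [AddCommGroup V] [Module ℝ V]
    (Φ : (V × (V →ₗ[ℝ] ℝ)) →ₗ[ℝ] (V × (V →ₗ[ℝ] ℝ))) :
    (ℂ ⊗[ℝ] (V × (V →ₗ[ℝ] ℝ))) →ₗ[ℂ] (ℂ ⊗[ℝ] (V × (V →ₗ[ℝ] ℝ))) :=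
  (LinearMap.id : (ℂ ⊗[ℝ] (V × (V →ₗ[ℝ] ℝ))) →ₗ[ℂ] ℂ ⊗[ℝ] (V × (V →ₗ[ℝ] ℝ))) -
    Complex.I • (Φ.baseChange ℂ)

/-- The map `e ↦ e + iΦ(e)` on the complexified double. -/
noncomputable def gcProj01 {V : Type*} [AddCommGroup V] [Module ℝ V]
    (Φ : (V × (V →ₗ[ℝ] ℝ)) →ₗ[ℝ] (V × (V →ₗ[ℝ] ℝ))) :
    (ℂ ⊗[ℝ] (V × (V →ₗ[ℝ] ℝ))) →ₗ[ℂ] (ℂ ⊗[ℝ] (V × (V →ₗ[ℝ] ℝ))) :=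
  (LinearMap.id : (ℂ ⊗[ℝ] (V × (V →ₗ[ℝ] ℝ))) →ₗ[ℂ] ℂ ⊗[ℝ] (V × (V →ₗ[ℝ] ℝ))) +
    Complex.I • (Φ.baseChange ℂ)

/-- `E^{1,0} = { e − iΦ(e) : e ∈ (ker η ⊕ ker F)_ℂ }`. -/
noncomputable def gcE10 {V : Type*} [AddCommGroup V] [Module ℝ V]
    (Φ : (V × (V →ₗ[ℝ] ℝ)) →ₗ[ℝ] (V × (V →ₗ[ℝ] ℝ))) (F : V) (η : (V →ₗ[ℝ] ℝ)) :
    Submodule ℂ (ℂ ⊗[ℝ] (V × (V →ₗ[ℝ] ℝ))) :=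
  Submodule.map (gcProj10 Φ) (gcKerC F η)

/-- `E^{0,1} = { e + iΦ(e) : e ∈ (ker η ⊕ ker F)_ℂ }`. -/
noncomputable def gcE01 {V : Type*} [AddCommGroup V] [Module ℝ V]
    (Φ : (V × (V →ₗ[ℝ] ℝ)) →ₗ[ℝ] (V × (V →ₗ[ℝ] ℝ))) (F : V) (η : (V →ₗ[ℝ] ℝ)) :
    Submodule ℂ (ℂ ⊗[ℝ] (V × (V →ₗ[ℝ] ℝ))) :=
  Submodule.map (gcProj01 Φ) (gcKerC F η)

namespace GCAux

variable {V : Type*} [AddCommGroup V] [Module ℝ V]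

noncomputable def etaC (η : V →ₗ[ℝ] ℝ) : (ℂ ⊗[ℝ] (V × (V →ₗ[ℝ] ℝ))) →ₗ[ℂ] ℂ :=
  LinearMap.liftBaseChange ℂ ((Algebra.linearMap ℝ ℂ).comp (gcEta η))

noncomputable def fC (F : V) : (ℂ ⊗[ℝ] (V × (V →ₗ[ℝ] ℝ))) →ₗ[ℂ] ℂ :=
  LinearMap.liftBaseChange ℂ ((Algebra.linearMap ℝ ℂ).comp (gcF F))

@[simp] lemma etaC_tmul (η : V →ₗ[ℝ] ℝ) (c : ℂ) (u : V × (V →ₗ[ℝ] ℝ)) :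
    etaC η (c ⊗ₜ[ℝ] u) = c * (η u.1 : ℝ) := by
  simp [etaC, gcEta, LinearMap.liftBaseChange_tmul, Algebra.smul_def]

@[simp] lemma fC_tmul (F : V) (c : ℂ) (u : V × (V →ₗ[ℝ] ℝ)) :
    fC F (c ⊗ₜ[ℝ] u) = c * (u.2 F : ℝ) := by
  simp [fC, gcF, LinearMap.liftBaseChange_tmul, Algebra.smul_def]

lemma key (c : ℂ) (r : ℝ) (x : V × (V →ₗ[ℝ] ℝ)) :
    (c * (r : ℂ)) • ((1:ℂ) ⊗ₜ[ℝ] x) = c ⊗ₜ[ℝ] (r • x) := by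
  rw [mul_smul, ← Complex.coe_algebraMap, algebraMap_smul, ← tmul_smul, smul_tmul',
    smul_eq_mul, mul_one]

section main
variable (Φ : (V × (V →ₗ[ℝ] ℝ)) →ₗ[ℝ] (V × (V →ₗ[ℝ] ℝ))) (F : V) (η : V →ₗ[ℝ] ℝ)

lemma ker_le_etaC : gcKerC F η ≤ LinearMap.ker (etaC η) := by
  rw [gcKerC, Submodule.baseChange_eq_span, Submodule.span_le]
  rintro x ⟨m, hm, rfl⟩
  have h1 : η m.1 = 0 := hm.1
  simp [TensorProduct.mk_apply, h1]

lemma ker_le_fC : gcKerC F η ≤ LinearMap.ker (fC F) := by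
  rw [gcKerC, Submodule.baseChange_eq_span, Submodule.span_le]
  rintro x ⟨m, hm, rfl⟩
  have h1 : m.2 F = 0 := hm.2
  simp [TensorProduct.mk_apply, h1]

lemma pi_mem (hηF : η F = 1) :
    ∀ w : ℂ ⊗[ℝ] (V × (V →ₗ[ℝ] ℝ)),
      w - etaC η w • ((1:ℂ) ⊗ₜ[ℝ] ((F, 0) : V × (V →ₗ[ℝ] ℝ)))
        - fC F w • ((1:ℂ) ⊗ₜ[ℝ] ((0, η) : V × (V →ₗ[ℝ] ℝ))) ∈ gcKerC F η := by
  intro w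
  induction w using TensorProduct.induction_on with
  | zero => simpa using (gcKerC F η).zero_mem
  | tmul c u =>
    have hmem : (u - η u.1 • ((F, 0) : V × (V →ₗ[ℝ] ℝ)) - u.2 F • ((0, η))) ∈
        LinearMap.ker (gcEta η) ⊓ LinearMap.ker (gcF F) := by
      constructor <;>
        simp [gcEta, gcF, hηF]
    have := Submodule.tmul_mem_baseChange_of_mem (R := ℝ) (A := ℂ) c hmem
    rw [gcKerC]
    convert this using 1
    rw [tmul_sub, tmul_sub, ← key, ← key, etaC_tmul, fC_tmul]
  | add x y hx hy =>
    have := Submodule.add_mem _ hx hy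
    convert this using 1
    simp only [map_add, add_smul]
    abel

lemma eta_phi (B : LinearMap.BilinForm ℝ (V × (V →ₗ[ℝ] ℝ)))
    (hB : ∀ u v : V × (V →ₗ[ℝ] ℝ), B u v = (v.2 u.1 + u.2 v.1) / 2)
    (hskew : ∀ u v : V × (V →ₗ[ℝ] ℝ), B (Φ u) v + B u (Φ v) = 0)
    (hΦη : Φ (0, η) = 0) : ∀ u, η (Φ u).1 = 0 := by
  intro u
  have h := hskew u (0, η)
  rw [hΦη, hB, hB] at h
  simp at h
  linarith

lemma f_phi (B : LinearMap.BilinForm ℝ (V × (V →ₗ[ℝ] ℝ)))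
    (hB : ∀ u v : V × (V →ₗ[ℝ] ℝ), B u v = (v.2 u.1 + u.2 v.1) / 2)
    (hskew : ∀ u v : V × (V →ₗ[ℝ] ℝ), B (Φ u) v + B u (Φ v) = 0)
    (hΦF : Φ (F, 0) = 0) : ∀ u, (Φ u).2 F = 0 := by
  intro u
  have h := hskew u (F, 0)
  rw [hΦF, hB, hB] at h
  simp at h
  linarith

lemma phi_mem (hη : ∀ u, η (Φ u).1 = 0) (hf : ∀ u, (Φ u).2 F = 0) :
    ∀ w, Φ.baseChange ℂ w ∈ gcKerC F η := by
  intro w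
  induction w using TensorProduct.induction_on with
  | zero => simpa using (gcKerC F η).zero_mem
  | tmul c u =>
    rw [LinearMap.baseChange_tmul, gcKerC]
    exact Submodule.tmul_mem_baseChange_of_mem c ⟨hη u, hf u⟩
  | add x y hx hy =>
    rw [map_add]; exact Submodule.add_mem _ hx hy

lemma phi2C (hΦ2 : ∀ u : V × (V →ₗ[ℝ] ℝ), Φ (Φ u) = -u + (η u.1 • F, u.2 F • η)) :
    ∀ w, Φ.baseChange ℂ (Φ.baseChange ℂ w) =
      -w + etaC η w • ((1:ℂ) ⊗ₜ[ℝ] ((F, 0) : V × (V →ₗ[ℝ] ℝ)))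
        + fC F w • ((1:ℂ) ⊗ₜ[ℝ] ((0, η) : V × (V →ₗ[ℝ] ℝ))) := by
  intro w
  induction w using TensorProduct.induction_on with
  | zero => simp
  | tmul c u =>
    have hsplit : ((η u.1 • F, u.2 F • η) : V × (V →ₗ[ℝ] ℝ)) =
        η u.1 • ((F, 0) : V × (V →ₗ[ℝ] ℝ)) + u.2 F • ((0, η)) := by
      ext <;> simp
    rw [LinearMap.baseChange_tmul, LinearMap.baseChange_tmul, hΦ2, hsplit, tmul_add, tmul_add,
      tmul_neg, etaC_tmul, fC_tmul, ← key, ← key]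
    abel
  | add x y hx hy =>
    rw [map_add, map_add, hx, hy, map_add, map_add, add_smul, add_smul]
    abel
end main

end GCAux

set_option maxHeartbeats 2000000

/-- `(V ⊕ V*)_ℂ = ℂ·F ⊕ ℂ·η ⊕ E^{1,0} ⊕ E^{0,1}`, where `E^{1,0}` is the `+i`
eigenspace of `Φ`, `E^{0,1}` the `−i` eigenspace, and `ℂ·F ⊕ ℂ·η` the `0`-eigenspace. -/
theorem stmt4 (V : Type*) [AddCommGroup V] [Module ℝ V] [FiniteDimensional ℝ V]
    (n : ℕ) (hdim : Module.finrank ℝ V = 2 * n + 1)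
    (B : LinearMap.BilinForm ℝ (V × (V →ₗ[ℝ] ℝ)))
    (hB : ∀ u v : V × (V →ₗ[ℝ] ℝ), B u v = (v.2 u.1 + u.2 v.1) / 2)
    (Φ : (V × (V →ₗ[ℝ] ℝ)) →ₗ[ℝ] (V × (V →ₗ[ℝ] ℝ)))
    (hskew : ∀ u v : V × (V →ₗ[ℝ] ℝ), B (Φ u) v + B u (Φ v) = 0)
    (F : V) (η : V →ₗ[ℝ] ℝ)
    (hηF : η F = 1)
    (hΦF : Φ (F, 0) = 0)
    (hΦη : Φ (0, η) = 0)
    (hΦ2 : ∀ u : V × (V →ₗ[ℝ] ℝ), Φ (Φ u) = -u + (η u.1 • F, u.2 F • η)) :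
    ∀ S : Fin 4 → Submodule ℂ (ℂ ⊗[ℝ] (V × (V →ₗ[ℝ] ℝ))),
      S 0 = Submodule.span ℂ {(1 : ℂ) ⊗ₜ[ℝ] ((F, 0) : V × (V →ₗ[ℝ] ℝ))} →
      S 1 = Submodule.span ℂ {(1 : ℂ) ⊗ₜ[ℝ] ((0, η) : V × (V →ₗ[ℝ] ℝ))} →
      S 2 = gcE10 Φ F η → S 3 = gcE01 Φ F η →
      (iSupIndep S ∧ (⨆ i, S i) = ⊤) ∧
        gcE10 Φ F η = Module.End.eigenspace (Φ.baseChange ℂ) Complex.I ∧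
        gcE01 Φ F η = Module.End.eigenspace (Φ.baseChange ℂ) (-Complex.I) ∧
        S 0 ⊔ S 1 = Module.End.eigenspace (Φ.baseChange ℂ) 0 := by
  
  intro S hS0 hS1 hS2 hS3
  set e0 : ℂ ⊗[ℝ] (V × (V →ₗ[ℝ] ℝ)) := (1:ℂ) ⊗ₜ[ℝ] ((F, 0) : V × (V →ₗ[ℝ] ℝ)) with he0
  set e1 : ℂ ⊗[ℝ] (V × (V →ₗ[ℝ] ℝ)) := (1:ℂ) ⊗ₜ[ℝ] ((0, η) : V × (V →ₗ[ℝ] ℝ)) with he1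
  have hA := GCAux.eta_phi Φ η B hB hskew hΦη
  have hBF := GCAux.f_phi Φ F B hB hskew hΦF
  have hrange : ∀ w, Φ.baseChange ℂ w ∈ gcKerC F η := GCAux.phi_mem Φ F η hA hBF
  have hketa : ∀ x ∈ gcKerC F η, GCAux.etaC η x = 0 := fun x hx => GCAux.ker_le_etaC F η hx
  have hkf : ∀ x ∈ gcKerC F η, GCAux.fC F x = 0 := fun x hx => GCAux.ker_le_fC F η hx
  have hsq0 := GCAux.phi2C Φ F η hΦ2
  have hsq : ∀ k ∈ gcKerC F η, Φ.baseChange ℂ (Φ.baseChange ℂ k) = -k := by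
    intro k hk
    rw [hsq0 k, hketa k hk, hkf k hk]
    simp
  have hΦe0 : Φ.baseChange ℂ e0 = 0 := by
    rw [he0, LinearMap.baseChange_tmul, hΦF, tmul_zero]
  have hΦe1 : Φ.baseChange ℂ e1 = 0 := by
    rw [he1, LinearMap.baseChange_tmul, hΦη, tmul_zero]
  have hηe0 : GCAux.etaC η e0 = 1 := by rw [he0, GCAux.etaC_tmul]; simp [hηF]
  have hηe1 : GCAux.etaC η e1 = 0 := by rw [he1, GCAux.etaC_tmul]; simp
  have hfe0 : GCAux.fC F e0 = 0 := by rw [he0, GCAux.fC_tmul]; simp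
  have hfe1 : GCAux.fC F e1 = 1 := by rw [he1, GCAux.fC_tmul]; simp [hηF]
  have hproj10 : ∀ k, gcProj10 Φ k = k - Complex.I • Φ.baseChange ℂ k := fun k => rfl
  have hproj01 : ∀ k, gcProj01 Φ k = k + Complex.I • Φ.baseChange ℂ k := fun k => rfl
  have hE10K : gcE10 Φ F η ≤ gcKerC F η := by
    rintro x ⟨k, hk, rfl⟩
    rw [hproj10]
    exact sub_mem hk (Submodule.smul_mem _ _ (hrange k))
  have hE01K : gcE01 Φ F η ≤ gcKerC F η := by
    rintro x ⟨k, hk, rfl⟩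
    rw [hproj01]
    exact add_mem hk (Submodule.smul_mem _ _ (hrange k))
  -- E10 is the +i eigenspace
  have hE10 : gcE10 Φ F η = Module.End.eigenspace (Φ.baseChange ℂ) Complex.I := by
    apply le_antisymm
    · rintro x ⟨k, hk, rfl⟩
      rw [Module.End.mem_eigenspace_iff, hproj10, map_sub, LinearMap.map_smul, hsq k hk]
      match_scalars <;>
        first
          | ring1
          | linear_combination Complex.I_mul_I
          | linear_combination -Complex.I_mul_I
          | linear_combination (-2⁻¹ : ℂ) * Complex.I_mul_I
          | linear_combination (2⁻¹ : ℂ) * Complex.I_mul_I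
    · intro v hv
      rw [Module.End.mem_eigenspace_iff] at hv
      have hvK : v ∈ gcKerC F η := by
        have h2 : v = (-Complex.I) • (Φ.baseChange ℂ v) := by
          rw [hv, smul_smul, neg_mul, Complex.I_mul_I, neg_neg, one_smul]
        rw [h2]
        exact Submodule.smul_mem _ _ (hrange v)
      refine ⟨(2⁻¹ : ℂ) • v, Submodule.smul_mem _ _ hvK, ?_⟩
      rw [hproj10, LinearMap.map_smul, hv]
      match_scalars <;>
        first
          | ring1
          | linear_combination Complex.I_mul_I
          | linear_combination -Complex.I_mul_I
          | linear_combination (-2⁻¹ : ℂ) * Complex.I_mul_I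
          | linear_combination (2⁻¹ : ℂ) * Complex.I_mul_I
  -- E01 is the -i eigenspace
  have hE01 : gcE01 Φ F η = Module.End.eigenspace (Φ.baseChange ℂ) (-Complex.I) := by
    apply le_antisymm
    · rintro x ⟨k, hk, rfl⟩
      rw [Module.End.mem_eigenspace_iff, hproj01, map_add, LinearMap.map_smul, hsq k hk]
      match_scalars <;>
        first
          | ring1
          | linear_combination Complex.I_mul_I
          | linear_combination -Complex.I_mul_I
          | linear_combination (-2⁻¹ : ℂ) * Complex.I_mul_I
          | linear_combination (2⁻¹ : ℂ) * Complex.I_mul_I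
    · intro v hv
      rw [Module.End.mem_eigenspace_iff] at hv
      have hvK : v ∈ gcKerC F η := by
        have h2 : v = Complex.I • (Φ.baseChange ℂ v) := by
          rw [hv, smul_smul, mul_neg, Complex.I_mul_I, neg_neg, one_smul]
        rw [h2]
        exact Submodule.smul_mem _ _ (hrange v)
      refine ⟨(2⁻¹ : ℂ) • v, Submodule.smul_mem _ _ hvK, ?_⟩
      rw [hproj01, LinearMap.map_smul, hv]
      match_scalars <;>
        first
          | ring1
          | linear_combination Complex.I_mul_I
          | linear_combination -Complex.I_mul_I
          | linear_combination (-2⁻¹ : ℂ) * Complex.I_mul_I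
          | linear_combination (2⁻¹ : ℂ) * Complex.I_mul_I
  -- span e0 ⊔ span e1 is the 0 eigenspace
  have hsup01 : S 0 ⊔ S 1 = Module.End.eigenspace (Φ.baseChange ℂ) 0 := by
    rw [hS0, hS1]
    apply le_antisymm
    · refine sup_le ?_ ?_ <;> rw [Submodule.span_le, Set.singleton_subset_iff] <;>
        simp only [SetLike.mem_coe, Module.End.mem_eigenspace_iff, zero_smul]
      · exact hΦe0
      · exact hΦe1
    · intro v hv
      rw [Module.End.mem_eigenspace_iff, zero_smul] at hv
      have h2 := hsq0 v
      rw [hv, map_zero] at h2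
      have h3 : v = GCAux.etaC η v • e0 + GCAux.fC F v • e1 := by
        have h := h2.symm
        rwa [add_assoc, neg_add_eq_zero] at h
      rw [h3]
      exact Submodule.add_mem _
        (Submodule.mem_sup_left (Submodule.smul_mem _ _ (Submodule.mem_span_singleton_self _)))
        (Submodule.mem_sup_right (Submodule.smul_mem _ _ (Submodule.mem_span_singleton_self _)))
  -- the kernel splits into E10 ⊔ E01
  have hKsplit : ∀ k ∈ gcKerC F η, k ∈ gcE10 Φ F η ⊔ gcE01 Φ F η := by
    intro k hk
    have hdecomp : k = gcProj10 Φ ((2⁻¹ : ℂ) • k) + gcProj01 Φ ((2⁻¹ : ℂ) • k) := by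
      rw [hproj10, hproj01, LinearMap.map_smul]
      module
    rw [hdecomp]
    exact Submodule.add_mem _
      (Submodule.mem_sup_left ⟨_, Submodule.smul_mem _ _ hk, rfl⟩)
      (Submodule.mem_sup_right ⟨_, Submodule.smul_mem _ _ hk, rfl⟩)
  -- the total space decomposes
  have htop : (⨆ i, S i) = ⊤ := by
    rw [eq_top_iff]
    rintro w -
    have hk := GCAux.pi_mem F η hηF w
    have hw : w = (w - GCAux.etaC η w • e0 - GCAux.fC F w • e1) + GCAux.etaC η w • e0 + GCAux.fC F w • e1 := by abel
    rw [hw]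
    refine add_mem (add_mem ?_ ?_) ?_
    · have : w - GCAux.etaC η w • e0 - GCAux.fC F w • e1 ∈ S 2 ⊔ S 3 := by
        rw [hS2, hS3]; exact hKsplit _ hk
      exact (sup_le (le_iSup S 2) (le_iSup S 3)) this
    · refine le_iSup S 0 ?_
      rw [hS0]
      exact Submodule.smul_mem _ _ (Submodule.mem_span_singleton_self _)
    · refine le_iSup S 1 ?_
      rw [hS1]
      exact Submodule.smul_mem _ _ (Submodule.mem_span_singleton_self _)
  have hS2K : S 2 ≤ gcKerC F η := by rw [hS2]; exact hE10K
  have hS3K : S 3 ≤ gcKerC F η := by rw [hS3]; exact hE01K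
  have hS0le : S 0 ≤ Module.End.eigenspace (Φ.baseChange ℂ) 0 := by
    rw [← hsup01]; exact le_sup_left
  have hS1le : S 1 ≤ Module.End.eigenspace (Φ.baseChange ℂ) 0 := by
    rw [← hsup01]; exact le_sup_right
  have hS2le : S 2 ≤ Module.End.eigenspace (Φ.baseChange ℂ) Complex.I := by
    rw [hS2, hE10]
  have hS3le : S 3 ≤ Module.End.eigenspace (Φ.baseChange ℂ) (-Complex.I) := by
    rw [hS3, hE01]
  have hne0I : (0 : ℂ) ≠ Complex.I := Complex.I_ne_zero.symm
  have hneI : (-Complex.I) ≠ Complex.I := by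
    simp only [ne_eq, Complex.ext_iff, Complex.neg_im, Complex.I_im, Complex.neg_re,
      Complex.I_re, neg_zero, true_and]
    norm_num
  have hneI' : Complex.I ≠ -Complex.I := hneI.symm
  have hne0I' : (0 : ℂ) ≠ -Complex.I := by simpa using Complex.I_ne_zero.symm
  have hEig := Module.End.eigenspaces_iSupIndep (Φ.baseChange ℂ)
  have hEigD := iSupIndep_def.mp hEig
  have hindep : iSupIndep S := by
    rw [iSupIndep_def]
    intro i
    fin_cases i
    · -- i = 0 : kill with etaC
      show Disjoint (S 0) (⨆ j, ⨆ (_ : j ≠ (0 : Fin 4)), S j)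
      have hle : (⨆ j, ⨆ (_ : j ≠ (0 : Fin 4)), S j) ≤ LinearMap.ker (GCAux.etaC η) := by
        refine iSup_le fun j => iSup_le fun hj => ?_
        fin_cases j
        · exact absurd rfl hj
        · show S 1 ≤ _
          rw [hS1, Submodule.span_le, Set.singleton_subset_iff]
          simpa using hηe1
        · exact le_trans hS2K (GCAux.ker_le_etaC F η)
        · exact le_trans hS3K (GCAux.ker_le_etaC F η)
      rw [Submodule.disjoint_def]
      intro x hx hx'
      rw [hS0] at hx
      rcases Submodule.mem_span_singleton.mp hx with ⟨c, rfl⟩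
      have h0 : GCAux.etaC η (c • e0) = 0 := hle hx'
      rw [map_smul, hηe0, smul_eq_mul, mul_one] at h0
      rw [h0, zero_smul]
    · -- i = 1 : kill with fC
      show Disjoint (S 1) (⨆ j, ⨆ (_ : j ≠ (1 : Fin 4)), S j)
      have hle : (⨆ j, ⨆ (_ : j ≠ (1 : Fin 4)), S j) ≤ LinearMap.ker (GCAux.fC F) := by
        refine iSup_le fun j => iSup_le fun hj => ?_
        fin_cases j
        · show S 0 ≤ _
          rw [hS0, Submodule.span_le, Set.singleton_subset_iff]
          simpa using hfe0
        · exact absurd rfl hj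
        · exact le_trans hS2K (GCAux.ker_le_fC F η)
        · exact le_trans hS3K (GCAux.ker_le_fC F η)
      rw [Submodule.disjoint_def]
      intro x hx hx'
      rw [hS1] at hx
      rcases Submodule.mem_span_singleton.mp hx with ⟨c, rfl⟩
      have h0 : GCAux.fC F (c • e1) = 0 := hle hx'
      rw [map_smul, hfe1, smul_eq_mul, mul_one] at h0
      rw [h0, zero_smul]
    · -- i = 2 : eigenspace independence
      show Disjoint (S 2) (⨆ j, ⨆ (_ : j ≠ (2 : Fin 4)), S j)
      rw [hS2, hE10]
      refine (hEigD Complex.I).mono_right ?_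
      refine iSup_le fun j => iSup_le fun hj => ?_
      fin_cases j
      · exact le_trans hS0le (le_iSup_of_le 0 (le_iSup_of_le hne0I le_rfl))
      · exact le_trans hS1le (le_iSup_of_le 0 (le_iSup_of_le hne0I le_rfl))
      · exact absurd rfl hj
      · exact le_trans hS3le (le_iSup_of_le (-Complex.I) (le_iSup_of_le hneI le_rfl))
    · -- i = 3
      show Disjoint (S 3) (⨆ j, ⨆ (_ : j ≠ (3 : Fin 4)), S j)
      rw [hS3, hE01]
      refine (hEigD (-Complex.I)).mono_right ?_
      refine iSup_le fun j => iSup_le fun hj => ?_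
      fin_cases j
      · exact le_trans hS0le (le_iSup_of_le 0 (le_iSup_of_le hne0I' le_rfl))
      · exact le_trans hS1le (le_iSup_of_le 0 (le_iSup_of_le hne0I' le_rfl))
      · exact le_trans hS2le (le_iSup_of_le Complex.I (le_iSup_of_le hneI' le_rfl))
      · exact absurd rfl hj
  exact ⟨⟨hindep, htop⟩, hE10, hE01, hsup01⟩
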